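/- (Sufficiency of a power-law Pareto frontier for first-order collapse.) Let 𝓛 : (0,∞) × (0,∞) → (0,∞) be continuously differentiable in its first argument (compute c) for each model size p. Let P ⊆ (0,∞) be nonempty, c* : P → (0,∞) a map whose image is contained in an open interval I ⊆ (0,∞), and suppose there exist a > 0, δ ∈ ℝ such that the function 𝓛*(c) = a·c^(−δ) satisfies 𝓛*(c) ≤ 𝓛(c,p) for all c ∈ I, p ∈ P, with equality 𝓛*(c*(p)) = 𝓛(c*(p), p) for every p ∈ P. Define ℓ(x,p) = 𝓛(x·c*(p), p)/𝓛(c*(p), p). Then for every p ∈ P, the derivative of x ↦ ℓ(x,p) at x = 1 equals −δ; i.e., all normalized curves share the same first-order behavior at x = 1, independent of p. -/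

import Mathlib

/-- **Sufficiency of a power-law Pareto frontier for first-order collapse.**
If the power law `𝓛*(c) = a·c^(−δ)` lower-bounds the loss curves `𝓛(c,p)` on an open
interval `I` containing the image of the compute-optimal map `c*`, with tangency
`𝓛*(c*(p)) = 𝓛(c*(p),p)`, then each normalized curve `x ↦ ℓ(x,p) = 𝓛(x·c*(p),p)/𝓛(c*(p),p)`
has derivative `−δ` at `x = 1`, independent of `p`. -/
theorem stmt_5
    (𝓛 : ℝ → ℝ → ℝ)
    (hpos : ∀ c p : ℝ, 0 < c → 0 < p → 0 < 𝓛 c p)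
    (hC1 : ∀ p : ℝ, 0 < p → ContDiffOn ℝ 1 (fun c => 𝓛 c p) (Set.Ioi 0))
    (P : Set ℝ) (hPne : P.Nonempty) (hP : P ⊆ Set.Ioi 0)
    (cstar : ℝ → ℝ) (hcstar : ∀ p ∈ P, 0 < cstar p)
    (I : Set ℝ) (hIopen : IsOpen I) (hIconn : I.OrdConnected) (hIpos : I ⊆ Set.Ioi 0)
    (himage : ∀ p ∈ P, cstar p ∈ I)
    (a δ : ℝ) (ha : 0 < a)
    (hlower : ∀ c ∈ I, ∀ p ∈ P, a * c ^ (-δ) ≤ 𝓛 c p)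
    (htangent : ∀ p ∈ P, a * (cstar p) ^ (-δ) = 𝓛 (cstar p) p)
    (ℓ : ℝ → ℝ → ℝ)
    (hℓ : ∀ x p : ℝ, ℓ x p = 𝓛 (x * cstar p) p / 𝓛 (cstar p) p) :
    ∀ p ∈ P, HasDerivAt (fun x => ℓ x p) (-δ) 1 := by
  intro p hp
  have hppos : 0 < p := hP hp
  have hc : 0 < cstar p := hcstar p hp
  have hcI : cstar p ∈ I := himage p hp
  have hcne : cstar p ≠ 0 := ne_of_gt hc
  have hcIoi : cstar p ∈ Set.Ioi (0:ℝ) := hIpos hcI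
  have hdiff : DifferentiableAt ℝ (fun c => 𝓛 c p) (cstar p) := by
    have h := ((hC1 p hppos).differentiableOn one_ne_zero) (cstar p) hcIoi
    exact h.differentiableAt (isOpen_Ioi.mem_nhds hcIoi)
  set L' := deriv (fun c => 𝓛 c p) (cstar p) with hL'def
  have hL : HasDerivAt (fun c => 𝓛 c p) L' (cstar p) := hdiff.hasDerivAt
  have hpow : HasDerivAt (fun c : ℝ => a * c ^ (-δ))
      (a * (-δ * cstar p ^ (-δ - 1))) (cstar p) :=
    (Real.hasDerivAt_rpow_const (Or.inl hcne)).const_mul a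
  have hg : HasDerivAt (fun c => 𝓛 c p - a * c ^ (-δ))
      (L' - a * (-δ * cstar p ^ (-δ - 1))) (cstar p) := hL.sub hpow
  have hmin : IsLocalMin (fun c => 𝓛 c p - a * c ^ (-δ)) (cstar p) := by
    have h0 := htangent p hp
    filter_upwards [hIopen.mem_nhds hcI] with c hcI'
    have := hlower c hcI' p hp
    linarith
  have hzero : L' - a * (-δ * cstar p ^ (-δ - 1)) = 0 := hmin.hasDerivAt_eq_zero hg
  have hLval : L' = a * (-δ * cstar p ^ (-δ - 1)) := by linarith
  have h1 : HasDerivAt (fun x : ℝ => x * cstar p) (cstar p) 1 := by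
    simpa using (hasDerivAt_id (1:ℝ)).mul_const (cstar p)
  have hL1 : HasDerivAt (fun c => 𝓛 c p) L' (1 * cstar p) := by rwa [one_mul]
  have hcomp : HasDerivAt (fun x => 𝓛 (x * cstar p) p) (L' * cstar p) 1 :=
    by have := hL1.comp 1 h1; exact this
  have hdiv := hcomp.div_const (𝓛 (cstar p) p)
  have hfun : (fun x => ℓ x p) = fun x => 𝓛 (x * cstar p) p / 𝓛 (cstar p) p :=
    funext fun x => hℓ x p
  rw [hfun]
  convert hdiv using 1
  · rfl
  · rfl
  have hLpos : 0 < 𝓛 (cstar p) p := hpos _ _ hc hppos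
  rw [hLval, ← htangent p hp, Real.rpow_sub_one hcne]
  field_simp
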